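/- arXiv:1505.07925 — 4 statements merged into one kernel-verified Lean document; each statement's English description precedes it below -/
import Mathlib

section
/- For a reversible, irreducible, aperiodic Markov chain on a finite state space with transition matrix P and stationary distribution π, and for any canonical path ensemble T (a collection containing, for each ordered pair of distinct states (γ,γ'), a unique simple path in the transition graph connecting them), the spectral gap satisfies Gap(P) = 1 − λ₂ ≥ 1 / (ρ(T) · ℓ(T)), where ℓ(T) is the maximal path length in the ensemble and ρ(T) = max over edges e of (1/Q(e)) · Σ_{paths T_{γ,γ'} containing e} π(γ)π(γ') is the path congestion parameter, with Q(γ,γ') = π(γ)P(γ,γ'). -/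
open Matrix BigOperators

section Helpers
variable {M : Type*}

private lemma telescope' (v : M → ℝ) : ∀ (p : List M) (x y : M),
    p.head? = some x → p.getLast? = some y →
    ((p.zip p.tail).map (fun e => v e.1 - v e.2)).sum = v x - v y
  | [], x, y, h, _ => by simp at h
  | [a], x, y, hx, hy => by
      simp at hx hy; subst hx; subst hy; simp
  | a :: b :: r, x, y, hx, hy => by
      simp at hx; subst hx
      have hy' : (b :: r).getLast? = some y := by
        rwa [List.getLast?_cons_cons] at hy
      have ht := telescope' v (b :: r) b y rfl hy'
      simp only [List.tail_cons] at ht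
      simp only [List.tail_cons, List.zip_cons_cons, List.map_cons, List.sum_cons, ht]
      ring

private lemma zip_tail_fst_sublist' : ∀ (p : List M), ((p.zip p.tail).map Prod.fst).Sublist p
  | [] => by simp
  | [a] => by simp
  | a :: b :: r => by
      simp only [List.tail, List.zip_cons_cons, List.map_cons]
      exact (zip_tail_fst_sublist' (b :: r)).cons₂ a

private lemma zip_tail_nodup' (p : List M) (h : p.Nodup) : (p.zip p.tail).Nodup :=
  ((zip_tail_fst_sublist' p).nodup h).of_map Prod.fst

private lemma chain'_mem_zip' {R : M → M → Prop} : ∀ {p : List M}, p.Chain' R →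
    ∀ a b : M, (a, b) ∈ p.zip p.tail → R a b
  | [], _, a, b, h => by simp at h
  | [c], _, a, b, h => by simp at h
  | c :: d :: r, hc, a, b, h => by
      rw [List.Chain', List.isChain_cons_cons] at hc
      simp only [List.tail, List.zip_cons_cons, List.mem_cons, Prod.mk.injEq] at h
      rcases h with ⟨rfl, rfl⟩ | h
      · exact hc.1
      · exact chain'_mem_zip' hc.2 a b h

private lemma list_cs' {α : Type*} [DecidableEq α] (l : List α) (hl : l.Nodup)
    (f : α → ℝ) :
    (l.map f).sum ^ 2 ≤ l.length * ∑ a ∈ l.toFinset, f a ^ 2 := by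
  rw [← List.sum_toFinset f hl, ← List.toFinset_card_of_nodup hl]
  exact sq_sum_le_card_mul_sum_sq (s := l.toFinset) (f := f)

end Helpers

/-- Sinclair's canonical path bound: for a reversible, irreducible,
aperiodic Markov chain with transition matrix `P` and stationary distribution `π`,
and any canonical path ensemble `T` (a unique simple path through edges of positive
weight `Q(a,b) = π(a)P(a,b)` for each ordered pair of distinct states), the spectral
gap satisfies `1 - lam₂ ≥ 1/(ρ(T) ℓ(T))`, where `ℓ` bounds the path lengths and `ρ`
bounds the congestion of every edge.  Here `lam₂`, the second largest eigenvalue of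
`P`, is characterized as the greatest eigenvalue of `P` possessing an eigenvector
orthogonal to `π`. -/
theorem canonical_path_spectral_gap {M : Type*} [Fintype M] [DecidableEq M]
    (P : Matrix M M ℝ) (π : M → ℝ)
    (hπ : ∀ x, 0 < π x) (hsum : ∑ x, π x = 1)
    (hst : ∀ x, ∑ y, P x y = 1) (hnn : ∀ x y, 0 ≤ P x y)
    (hrev : ∀ x y, π x * P x y = π y * P y x)
    (hprimitive : ∃ N : ℕ, ∀ k, N ≤ k → ∀ x y, 0 < (P ^ k) x y)
    (T : M → M → List M)
    (hpath : ∀ x y, x ≠ y → (T x y).head? = some x ∧ (T x y).getLast? = some y ∧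
      (T x y).Nodup ∧ (T x y).Chain' (fun a b => 0 < π a * P a b))
    (ℓ ρ : ℝ)
    (hℓ : ∀ x y, x ≠ y → ((T x y).length - 1 : ℝ) ≤ ℓ)
    (hρ : ∀ a b : M, 0 < π a * P a b →
      (∑ x, ∑ y, if x ≠ y ∧ (a, b) ∈ (T x y).zip (T x y).tail then π x * π y else 0)
        / (π a * P a b) ≤ ρ)
    (lam₂ : ℝ)
    (hlam : IsGreatest {l : ℝ | ∃ v : M → ℝ, v ≠ 0 ∧ (∑ x, π x * v x) = 0 ∧
      P.mulVec v = l • v} lam₂) :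
    1 / (ρ * ℓ) ≤ 1 - lam₂ := by
  classical
  obtain ⟨⟨v, hv0, hvorth, heig⟩, -⟩ := hlam
  set V := ∑ x, π x * v x ^ 2 with hVdef
  obtain ⟨a0, ha0⟩ := Function.ne_iff.mp hv0
  simp only [Pi.zero_apply] at ha0
  have hVpos : 0 < V := by
    refine Finset.sum_pos' (fun x _ => mul_nonneg (hπ x).le (sq_nonneg _))
      ⟨a0, Finset.mem_univ a0, mul_pos (hπ a0) (by exact pow_pos (abs_pos.mpr ha0) 2 |>.trans_le (by rw [sq_abs]))⟩
  have heig' : ∀ x, ∑ y, P x y * v y = lam₂ * v x := by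
    intro x
    have := congrFun heig x
    simpa [Matrix.mulVec, dotProduct] using this
  -- Dirichlet form identity
  have hA : ∑ x, ∑ y, π x * P x y * v x ^ 2 = V := by
    refine Finset.sum_congr rfl fun x _ => ?_
    rw [show ∑ y, π x * P x y * v x ^ 2 = π x * v x ^ 2 * ∑ y, P x y by
      rw [Finset.mul_sum]; exact Finset.sum_congr rfl fun y _ => by ring]
    rw [hst x, mul_one]
  have hB : ∑ x, ∑ y, π x * P x y * (v x * v y) = lam₂ * V := by
    rw [Finset.mul_sum]
    refine Finset.sum_congr rfl fun x _ => ?_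
    rw [show ∑ y, π x * P x y * (v x * v y) = π x * v x * ∑ y, P x y * v y by
      rw [Finset.mul_sum]; exact Finset.sum_congr rfl fun y _ => by ring]
    rw [heig' x]; ring
  have hC : ∑ x, ∑ y, π x * P x y * v y ^ 2 = V := by
    rw [Finset.sum_comm]
    refine Finset.sum_congr rfl fun y _ => ?_
    calc ∑ x, π x * P x y * v y ^ 2 = π y * v y ^ 2 * ∑ x, P y x := by
          rw [Finset.mul_sum]; exact Finset.sum_congr rfl fun x _ => by rw [hrev x y]; ring
      _ = π y * v y ^ 2 := by rw [hst y, mul_one]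
  have hD : ∑ x, ∑ y, π x * P x y * (v x - v y) ^ 2 = 2 * (1 - lam₂) * V := by
    have hexp : ∀ x, ∑ y, π x * P x y * (v x - v y) ^ 2
        = ((∑ y, π x * P x y * v x ^ 2) - 2 * (∑ y, π x * P x y * (v x * v y)))
          + (∑ y, π x * P x y * v y ^ 2) := by
      intro x
      rw [Finset.mul_sum, ← Finset.sum_sub_distrib, ← Finset.sum_add_distrib]
      exact Finset.sum_congr rfl fun y _ => by ring
    rw [Finset.sum_congr rfl fun x _ => hexp x, Finset.sum_add_distrib,
      Finset.sum_sub_distrib, ← Finset.mul_sum, hA, hB, hC]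
    ring
  -- variance identity
  have hS : ∑ x, ∑ y, π x * π y * (v x - v y) ^ 2 = 2 * V := by
    have hA' : ∑ x, ∑ y, π x * π y * v x ^ 2 = V := by
      refine Finset.sum_congr rfl fun x _ => ?_
      rw [show ∑ y, π x * π y * v x ^ 2 = π x * v x ^ 2 * ∑ y, π y by
        rw [Finset.mul_sum]; exact Finset.sum_congr rfl fun y _ => by ring]
      rw [hsum, mul_one]
    have hB' : ∑ x, ∑ y, π x * π y * (v x * v y) = 0 := by
      refine Finset.sum_eq_zero fun x _ => ?_
      rw [show ∑ y, π x * π y * (v x * v y) = π x * v x * ∑ y, π y * v y by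
        rw [Finset.mul_sum]; exact Finset.sum_congr rfl fun y _ => by ring]
      rw [hvorth, mul_zero]
    have hC' : ∑ x, ∑ y, π x * π y * v y ^ 2 = V := by
      rw [Finset.sum_comm]
      refine Finset.sum_congr rfl fun y _ => ?_
      calc ∑ x, π x * π y * v y ^ 2 = π y * v y ^ 2 * ∑ x, π x := by
            rw [Finset.mul_sum]; exact Finset.sum_congr rfl fun x _ => by ring
        _ = π y * v y ^ 2 := by rw [hsum, mul_one]
    have hexp : ∀ x, ∑ y, π x * π y * (v x - v y) ^ 2
        = ((∑ y, π x * π y * v x ^ 2) - 2 * (∑ y, π x * π y * (v x * v y)))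
          + (∑ y, π x * π y * v y ^ 2) := by
      intro x
      rw [Finset.mul_sum, ← Finset.sum_sub_distrib, ← Finset.sum_add_distrib]
      exact Finset.sum_congr rfl fun y _ => by ring
    rw [Finset.sum_congr rfl fun x _ => hexp x, Finset.sum_add_distrib,
      Finset.sum_sub_distrib, ← Finset.mul_sum, hA', hB', hC']
    ring
  -- positivity of ρ and ℓ
  have hex : ∃ b, b ≠ a0 := by
    by_contra h
    push_neg at h
    have h1 : ∑ x, π x * v x = π a0 * v a0 :=
      Finset.sum_eq_single_of_mem a0 (Finset.mem_univ _) (fun b _ hb => absurd (h b) hb)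
    rw [hvorth] at h1
    exact (mul_ne_zero (hπ a0).ne' ha0) h1.symm
  obtain ⟨b0, hb0⟩ := hex
  obtain ⟨h1, h2, h3, h4⟩ := hpath b0 a0 hb0
  obtain ⟨d, r, hp⟩ : ∃ d r, T b0 a0 = b0 :: d :: r := by
    rcases hq : T b0 a0 with _ | ⟨c, q⟩
    · rw [hq] at h1; simp at h1
    · rw [hq] at h1
      simp only [List.head?_cons, Option.some.injEq] at h1
      subst h1
      rcases q with _ | ⟨d, r⟩
      · rw [hq] at h2; simp at h2; exact absurd h2 hb0
      · exact ⟨d, r, rfl⟩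
  have hℓ1 : 1 ≤ ℓ := by
    have hh := hℓ b0 a0 hb0
    rw [hp] at hh
    simp only [List.length_cons] at hh
    push_cast at hh
    linarith [Nat.cast_nonneg (α := ℝ) r.length]
  have hmem0 : (b0, d) ∈ (T b0 a0).zip (T b0 a0).tail := by
    rw [hp]; simp
  have hQ0 : 0 < π b0 * P b0 d := chain'_mem_zip' h4 b0 d hmem0
  have indnn : ∀ (x y : M) (c : Prop) [Decidable c], (0:ℝ) ≤ if c then π x * π y else 0 := by
    intro x y c _; split
    · exact (mul_pos (hπ x) (hπ y)).le
    · exact le_rfl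
  have hN0 : 0 < ∑ x, ∑ y, if x ≠ y ∧ (b0, d) ∈ (T x y).zip (T x y).tail then π x * π y else 0 := by
    refine Finset.sum_pos' (fun x _ => Finset.sum_nonneg fun y _ => indnn x y _)
      ⟨b0, Finset.mem_univ _, Finset.sum_pos' (fun y _ => indnn b0 y _)
        ⟨a0, Finset.mem_univ _, ?_⟩⟩
    rw [if_pos ⟨hb0, hmem0⟩]
    exact mul_pos (hπ b0) (hπ a0)
  have hρpos : 0 < ρ := lt_of_lt_of_le (div_pos hN0 hQ0) (hρ b0 d hQ0)
  -- per-pair Cauchy–Schwarz bound along the canonical path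
  have pair_bound : ∀ x y, x ≠ y → π x * π y * (v x - v y) ^ 2
      ≤ ℓ * (π x * π y * ∑ e : M × M,
          if e ∈ (T x y).zip (T x y).tail then (v e.1 - v e.2) ^ 2 else 0) := by
    intro x y hxy
    obtain ⟨g1, g2, g3, g4⟩ := hpath x y hxy
    have hnil : T x y ≠ [] := by intro h; rw [h] at g1; simp at g1
    have htel := telescope' v (T x y) x y g1 g2
    have hcs := list_cs' _ (zip_tail_nodup' _ g3) (fun e : M × M => v e.1 - v e.2)
    rw [htel] at hcs
    have hfin : ∑ e : M × M,
        (if e ∈ (T x y).zip (T x y).tail then (v e.1 - v e.2) ^ 2 else 0)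
        = ∑ e ∈ ((T x y).zip (T x y).tail).toFinset, (v e.1 - v e.2) ^ 2 := by
      simp only [← List.mem_toFinset]
      rw [Finset.sum_ite_mem Finset.univ _ _, Finset.univ_inter]
    have hlen : ((((T x y).zip (T x y).tail).length : ℕ) : ℝ) ≤ ℓ := by
      have e1 : ((T x y).zip (T x y).tail).length = (T x y).length - 1 := by
        rw [List.length_zip, List.length_tail]
        exact min_eq_right (Nat.sub_le _ _)
      have e2 : 1 ≤ (T x y).length := List.length_pos_iff.mpr hnil
      rw [e1, Nat.cast_sub e2, Nat.cast_one]
      exact hℓ x y hxy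
    have hsnn : 0 ≤ ∑ e ∈ ((T x y).zip (T x y).tail).toFinset, (v e.1 - v e.2) ^ 2 :=
      Finset.sum_nonneg fun e _ => sq_nonneg _
    have h5 : (v x - v y) ^ 2 ≤ ℓ * ∑ e : M × M,
        if e ∈ (T x y).zip (T x y).tail then (v e.1 - v e.2) ^ 2 else 0 := by
      rw [hfin]
      exact hcs.trans (mul_le_mul_of_nonneg_right hlen hsnn)
    exact (mul_le_mul_of_nonneg_left h5 (mul_pos (hπ x) (hπ y)).le).trans_eq (by ring)
  -- step 1 : variance bounded by congested edge sums
  have step1 : 2 * V ≤ ℓ * ∑ x, ∑ y, (if x ≠ y then π x * π y * ∑ e : M × M,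
      (if e ∈ (T x y).zip (T x y).tail then (v e.1 - v e.2) ^ 2 else 0) else 0) := by
    rw [← hS, Finset.mul_sum]
    refine Finset.sum_le_sum fun x _ => ?_
    rw [Finset.mul_sum]
    refine Finset.sum_le_sum fun y _ => ?_
    by_cases hxy : x = y
    · subst hxy; simp
    · rw [if_pos hxy]
      exact pair_bound x y hxy
  -- step 2 : reorganize as a sum over edges
  have step2 : ∑ x, ∑ y, (if x ≠ y then π x * π y * ∑ e : M × M,
        (if e ∈ (T x y).zip (T x y).tail then (v e.1 - v e.2) ^ 2 else 0) else 0)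
      = ∑ e : M × M, (v e.1 - v e.2) ^ 2 *
          ∑ x, ∑ y, (if x ≠ y ∧ e ∈ (T x y).zip (T x y).tail then π x * π y else 0) := by
    have inner : ∀ x y : M, (if x ≠ y then π x * π y * ∑ e : M × M,
          (if e ∈ (T x y).zip (T x y).tail then (v e.1 - v e.2) ^ 2 else 0) else 0)
        = ∑ e : M × M, (if x ≠ y ∧ e ∈ (T x y).zip (T x y).tail
            then π x * π y * (v e.1 - v e.2) ^ 2 else 0) := by
      intro x y
      by_cases hxy : x ≠ y
      · rw [if_pos hxy, Finset.mul_sum]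
        refine Finset.sum_congr rfl fun e _ => ?_
        by_cases he : e ∈ (T x y).zip (T x y).tail
        · rw [if_pos he, if_pos ⟨hxy, he⟩]
        · rw [if_neg he, if_neg (fun h => he h.2), mul_zero]
      · rw [if_neg hxy, eq_comm]
        exact Finset.sum_eq_zero fun e _ => if_neg (fun h => hxy h.1)
    rw [Finset.sum_congr rfl fun x _ => Finset.sum_congr rfl fun y _ => inner x y]
    rw [Finset.sum_congr rfl fun x (_ : x ∈ Finset.univ) => Finset.sum_comm]
    rw [Finset.sum_comm]
    refine Finset.sum_congr rfl fun e _ => ?_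
    rw [Finset.mul_sum]
    refine Finset.sum_congr rfl fun x _ => ?_
    rw [Finset.mul_sum]
    refine Finset.sum_congr rfl fun y _ => ?_
    split_ifs with h
    · ring
    · rw [mul_zero]
  -- step 3 : congestion bound
  have step3 : ∑ e : M × M, (v e.1 - v e.2) ^ 2 *
        (∑ x, ∑ y, (if x ≠ y ∧ e ∈ (T x y).zip (T x y).tail then π x * π y else 0))
      ≤ ρ * (2 * (1 - lam₂) * V) := by
    have hrhs : ρ * (2 * (1 - lam₂) * V) = ∑ a, ∑ b, ρ * (π a * P a b * (v a - v b) ^ 2) := by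
      rw [← hD]; simp only [Finset.mul_sum]
    rw [hrhs, ← Fintype.sum_prod_type
      (f := fun e : M × M => ρ * (π e.1 * P e.1 e.2 * (v e.1 - v e.2) ^ 2))]
    refine Finset.sum_le_sum fun e _ => ?_
    obtain ⟨a, b⟩ := e
    dsimp only
    by_cases hcon : ∃ x y : M, x ≠ y ∧ (a, b) ∈ (T x y).zip (T x y).tail
    · obtain ⟨x0, y0, hx0y0, hmem⟩ := hcon
      have hQ : 0 < π a * P a b :=
        chain'_mem_zip' (hpath x0 y0 hx0y0).2.2.2 a b hmem
      have hNQ : (∑ x, ∑ y, if x ≠ y ∧ (a, b) ∈ (T x y).zip (T x y).tail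
          then π x * π y else 0) ≤ ρ * (π a * P a b) := by
        have := hρ a b hQ
        rw [div_le_iff₀ hQ] at this
        linarith
      calc (v a - v b) ^ 2 * (∑ x, ∑ y, if x ≠ y ∧ (a, b) ∈ (T x y).zip (T x y).tail
            then π x * π y else 0)
          ≤ (v a - v b) ^ 2 * (ρ * (π a * P a b)) :=
            mul_le_mul_of_nonneg_left hNQ (sq_nonneg _)
        _ = ρ * (π a * P a b * (v a - v b) ^ 2) := by ring
    · have hNz : (∑ x, ∑ y, if x ≠ y ∧ (a, b) ∈ (T x y).zip (T x y).tail
          then π x * π y else 0) = 0 :=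
        Finset.sum_eq_zero fun x _ => Finset.sum_eq_zero fun y _ =>
          if_neg (fun h => hcon ⟨x, y, h⟩)
      rw [hNz, mul_zero]
      exact mul_nonneg hρpos.le (mul_nonneg (mul_nonneg (hπ a).le (hnn a b)) (sq_nonneg _))
  -- conclusion
  have key : 2 * V ≤ ℓ * (ρ * (2 * (1 - lam₂) * V)) := by
    refine step1.trans ?_
    rw [step2]
    exact mul_le_mul_of_nonneg_left step3 (by linarith)
  have hρℓ : 0 < ρ * ℓ := mul_pos hρpos (by linarith)
  rw [div_le_iff₀ hρℓ]
  nlinarith [key, hVpos]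
end

section
/- Summing the rank-one projection gains over the missing influential indices: for γ underfitted (γ*∖γ nonempty), under the restricted eigenvalue condition with parameter ν for sets of size ≤ |γ ∪ γ*|, Σ_{ℓ ∈ γ*∖γ} ( ||Φ_{γ∪{ℓ}} X_{γ*} β*||² − ||Φ_γ X_{γ*} β*||² ) ≥ ν · (β*_{γ*})^T X_{γ*}^T (I − Φ_γ) X_{γ*} β*_{γ*} ≥ n ν² ||β*_{γ*∖γ}||². -/
open Matrix BigOperators

noncomputable def subCols {n p : ℕ} (X : Matrix (Fin n) (Fin p) ℝ) (γ : Finset (Fin p)) :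
    Matrix (Fin n) {j // j ∈ γ} ℝ := Matrix.of fun i j => X i j.1

noncomputable def gram {n p : ℕ} (X : Matrix (Fin n) (Fin p) ℝ) (γ : Finset (Fin p)) :
    Matrix {j // j ∈ γ} {j // j ∈ γ} ℝ := (subCols X γ)ᵀ * subCols X γ

noncomputable def proj {n p : ℕ} (X : Matrix (Fin n) (Fin p) ℝ) (γ : Finset (Fin p)) :
    Matrix (Fin n) (Fin n) ℝ := subCols X γ * (gram X γ)⁻¹ * (subCols X γ)ᵀ

section Aux

variable {m : ℕ} {ι : Type*} [Fintype ι]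

lemma dot_mulVec_left (A : Matrix (Fin m) ι ℝ) (v : ι → ℝ) (w : Fin m → ℝ) :
    (A *ᵥ v) ⬝ᵥ w = v ⬝ᵥ (Aᵀ *ᵥ w) := by
  rw [Matrix.mulVec_transpose, dotProduct_comm, Matrix.dotProduct_mulVec,
    dotProduct_comm]

lemma dot_self_nonneg (v : ι → ℝ) : 0 ≤ v ⬝ᵥ v :=
  Finset.sum_nonneg fun i _ => mul_self_nonneg _

lemma sym_idem_quad (M : Matrix (Fin m) (Fin m) ℝ) (hs : Mᵀ = M) (hi : M * M = M)
    (u : Fin m → ℝ) : (M *ᵥ u) ⬝ᵥ (M *ᵥ u) = u ⬝ᵥ (M *ᵥ u) := by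
  rw [dot_mulVec_left, Matrix.mulVec_mulVec, hs, hi]

lemma dot_self_mulVec (A : Matrix (Fin m) ι ℝ) (v : ι → ℝ) :
    (A *ᵥ v) ⬝ᵥ (A *ᵥ v) = v ⬝ᵥ ((Aᵀ * A) *ᵥ v) := by
  rw [dot_mulVec_left, Matrix.mulVec_mulVec]

end Aux

section Proj

variable {n p : ℕ} (X : Matrix (Fin n) (Fin p) ℝ) (γ' : Finset (Fin p))

lemma gram_symm : (gram X γ')ᵀ = gram X γ' := by
  rw [_root_.gram, Matrix.transpose_mul, Matrix.transpose_transpose]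

lemma proj_symm : (proj X γ')ᵀ = proj X γ' := by
  rw [proj, Matrix.transpose_mul, Matrix.transpose_mul, Matrix.transpose_transpose,
    Matrix.transpose_nonsing_inv, gram_symm, Matrix.mul_assoc]

lemma proj_mul_subCols (hdet : IsUnit (gram X γ').det) :
    proj X γ' * subCols X γ' = subCols X γ' := by
  rw [proj, Matrix.mul_assoc, Matrix.mul_assoc, ← _root_.gram,
    Matrix.nonsing_inv_mul _ hdet, Matrix.mul_one]

lemma proj_idem (hdet : IsUnit (gram X γ').det) :
    proj X γ' * proj X γ' = proj X γ' := by
  nth_rewrite 2 [proj]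
  rw [← Matrix.mul_assoc, ← Matrix.mul_assoc, proj_mul_subCols X γ' hdet, proj]

lemma gram_det_isUnit (ν : ℝ) (hν : 0 < ν) (hn : 0 < n)
    (h : ∀ v : {j // j ∈ γ'} → ℝ,
      ν * (∑ j, v j ^ 2) ≤ v ⬝ᵥ (((n : ℝ)⁻¹ • gram X γ').mulVec v)) :
    IsUnit (gram X γ').det := by
  have hpd : (gram X γ').PosDef := by
    refine Matrix.PosDef.of_dotProduct_mulVec_pos ?_ ?_
    · show (gram X γ')ᴴ = gram X γ'
      ext i j
      simp only [Matrix.conjTranspose_apply, star_trivial, _root_.gram, Matrix.mul_apply,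
        Matrix.transpose_apply]
      exact Finset.sum_congr rfl fun k _ => mul_comm _ _
    · intro x hx
      have hx2 : 0 < ∑ j, x j ^ 2 := by
        obtain ⟨j, hj⟩ := Function.ne_iff.mp hx
        exact Finset.sum_pos' (fun i _ => sq_nonneg _)
          ⟨j, Finset.mem_univ j, pow_two_pos_of_ne_zero hj⟩
      have h1 := h x
      rw [Matrix.smul_mulVec, dotProduct_smul, smul_eq_mul] at h1
      have hq : 0 < (n : ℝ)⁻¹ * (x ⬝ᵥ gram X γ' *ᵥ x) :=
        lt_of_lt_of_le (mul_pos hν hx2) h1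
      have : 0 < x ⬝ᵥ gram X γ' *ᵥ x := by
        by_contra hc
        push_neg at hc
        have : (n : ℝ)⁻¹ * (x ⬝ᵥ gram X γ' *ᵥ x) ≤ 0 :=
          mul_nonpos_of_nonneg_of_nonpos (by positivity) hc
        linarith
      simpa using this
  exact isUnit_iff_ne_zero.mpr (ne_of_gt hpd.det_pos)

end Proj

/-- summing the rank-one projection gains over the missing influential
indices `ℓ ∈ γ*∖γ`:
`Σ_ℓ (‖Φ_{γ∪{ℓ}} X β*‖² - ‖Φ_γ X β*‖²) ≥ ν (Xβ*)ᵀ(I - Φ_γ)(Xβ*) ≥ n ν² ‖β*_{γ*∖γ}‖²`,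
under the restricted eigenvalue condition at level ν for sets of size ≤ `|γ ∪ γ*|`
and column normalization `‖X_j‖² = n`. -/
theorem sum_forward_gains {n p : ℕ} (X : Matrix (Fin n) (Fin p) ℝ)
    (γ γs : Finset (Fin p)) (hne : (γs \ γ).Nonempty)
    (hnorm : ∀ j : Fin p, ∑ i, (X i j) ^ 2 = (n : ℝ))
    (ν : ℝ) (hν : 0 < ν)
    (hRE : ∀ γ' : Finset (Fin p), γ'.card ≤ (γ ∪ γs).card →
      ∀ v : {j // j ∈ γ'} → ℝ,
        ν * (∑ j, v j ^ 2) ≤ v ⬝ᵥ (((n : ℝ)⁻¹ • gram X γ').mulVec v))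
    (β : Fin p → ℝ) (hβ : ∀ j ∉ γs, β j = 0) :
    ν * ((X.mulVec β) ⬝ᵥ ((1 - proj X γ).mulVec (X.mulVec β))) ≤
      (∑ ℓ ∈ γs \ γ,
        ((∑ i, ((proj X (insert ℓ γ)).mulVec (X.mulVec β) i) ^ 2) -
          (∑ i, ((proj X γ).mulVec (X.mulVec β) i) ^ 2))) ∧
    (n : ℝ) * ν ^ 2 * (∑ j ∈ γs \ γ, (β j) ^ 2) ≤
      ν * ((X.mulVec β) ⬝ᵥ ((1 - proj X γ).mulVec (X.mulVec β))) := by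
  classical
  obtain ⟨ℓ₀, hℓ₀⟩ := hne
  have hℓ₀s : ℓ₀ ∈ γs := (Finset.mem_sdiff.mp hℓ₀).1
  -- n > 0
  have hn : 0 < n := by
    rcases Nat.eq_zero_or_pos n with hn0 | hn0
    · exfalso
      subst hn0
      have hcard : ({ℓ₀} : Finset (Fin p)).card ≤ (γ ∪ γs).card :=
        Finset.card_le_card (Finset.singleton_subset_iff.mpr (Finset.mem_union_right _ hℓ₀s))
      have h := hRE {ℓ₀} hcard (fun _ => 1)
      have hz : gram X ({ℓ₀} : Finset (Fin p)) = 0 := by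
        ext i j
        simp [_root_.gram, Matrix.mul_apply]
      rw [hz] at h
      simp only [smul_zero, Matrix.zero_mulVec, dotProduct_zero, one_pow,
        Finset.sum_const, Finset.univ_eq_attach, Finset.card_attach,
        Finset.card_singleton, nsmul_eq_mul, Nat.cast_one, mul_one] at h
      linarith
    · exact hn0
  have hnR : (0:ℝ) < n := by exact_mod_cast hn
  set A := subCols X γ with hA
  set P := proj X γ with hPdef
  have hPt : Pᵀ = P := proj_symm X γ
  have hdetγ : IsUnit (gram X γ).det :=
    gram_det_isUnit X γ ν hν hn (hRE γ (Finset.card_le_card Finset.subset_union_left))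
  have hPP : P * P = P := proj_idem X γ hdetγ
  have hPA : P * A = A := proj_mul_subCols X γ hdetγ
  have h1Pt : (1 - P)ᵀ = 1 - P := by rw [Matrix.transpose_sub, Matrix.transpose_one, hPt]
  have h1PP : (1 - P) * (1 - P) = 1 - P := by
    simp only [Matrix.mul_sub, Matrix.sub_mul, Matrix.one_mul, Matrix.mul_one, hPP]
    abel
  set u : Fin n → ℝ := X.mulVec β with hu
  set r : Fin n → ℝ := (1 - P) *ᵥ u with hrdef
  have hrru : u ⬝ᵥ r = r ⬝ᵥ r := by
    rw [hrdef]; exact (sym_idem_quad _ h1Pt h1PP u).symm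
  -- Aᵀ r = 0
  have hAtP : Aᵀ * (1 - P) = 0 := by
    have h1 : Aᵀ * P = Aᵀ := by
      have h2 := congrArg Matrix.transpose hPA
      rw [Matrix.transpose_mul, hPt] at h2
      exact h2
    rw [Matrix.mul_sub, Matrix.mul_one, h1, sub_self]
  have hAtr : Aᵀ *ᵥ r = 0 := by
    rw [hrdef, Matrix.mulVec_mulVec, hAtP, Matrix.zero_mulVec]
  set c : Fin p → ℝ := fun j => (fun i => X i j) ⬝ᵥ r with hc
  have hcγ : ∀ j ∈ γ, c j = 0 := by
    intro j hj
    have h1 := congrFun hAtr ⟨j, hj⟩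
    simp only [hc]
    simpa [hA, Matrix.mulVec, subCols, dotProduct] using h1
  -- PART 2 --
  set γ'' := γ ∪ γs with hγ''
  obtain ⟨z, hPu⟩ : ∃ z : {j // j ∈ γ} → ℝ, P *ᵥ u = A *ᵥ z := by
    refine ⟨((gram X γ)⁻¹ * Aᵀ) *ᵥ u, ?_⟩
    conv_rhs => rw [Matrix.mulVec_mulVec]
    rw [← Matrix.mul_assoc, hPdef, proj, ← hA]
  set W : Fin p → ℝ := fun j => β j - (if h : j ∈ γ then z ⟨j, h⟩ else 0) with hW
  have hrW : (subCols X γ'') *ᵥ (fun j => W j.1) = r := by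
    funext i
    have lhs_eq : ((subCols X γ'') *ᵥ (fun j => W j.1)) i = ∑ j ∈ γ'', X i j * W j := by
      simp only [Matrix.mulVec, dotProduct, subCols, Matrix.of_apply]
      exact Finset.sum_coe_sort γ'' (fun j => X i j * W j)
    have split : ∑ j ∈ γ'', X i j * W j
        = (∑ j ∈ γ'', X i j * β j)
          - ∑ j ∈ γ'', X i j * (if h : j ∈ γ then z ⟨j, h⟩ else 0) := by
      rw [← Finset.sum_sub_distrib]
      refine Finset.sum_congr rfl fun j _ => ?_
      simp only [hW]; ring
    have h1 : ∑ j ∈ γ'', X i j * β j = u i := by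
      have h2 : u i = ∑ j, X i j * β j := by
        rw [hu]; simp [Matrix.mulVec, dotProduct]
      rw [h2]
      apply Finset.sum_subset (Finset.subset_univ _)
      intro j _ hj
      rw [hβ j (fun hjs => hj (Finset.mem_union_right _ hjs)), mul_zero]
    have h2 : ∑ j ∈ γ'', X i j * (if h : j ∈ γ then z ⟨j, h⟩ else 0) = (P *ᵥ u) i := by
      rw [hPu]
      have hstep : ∑ j ∈ γ'', X i j * (if h : j ∈ γ then z ⟨j, h⟩ else 0)
          = ∑ j ∈ γ, X i j * (if h : j ∈ γ then z ⟨j, h⟩ else 0) := by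
        symm
        apply Finset.sum_subset Finset.subset_union_left
        intro j _ hj
        rw [dif_neg hj, mul_zero]
      rw [hstep]
      have h3 : (A *ᵥ z) i = ∑ j ∈ γ, X i j * (if h : j ∈ γ then z ⟨j, h⟩ else 0) := by
        simp only [hA, Matrix.mulVec, dotProduct, subCols, Matrix.of_apply]
        rw [← Finset.sum_coe_sort γ (fun j => X i j * (if h : j ∈ γ then z ⟨j, h⟩ else 0))]
        exact Finset.sum_congr rfl fun j _ => by rw [dif_pos j.2]
      rw [h3]
    rw [lhs_eq, split, h1, h2, hrdef]
    simp [Matrix.sub_mulVec, Matrix.one_mulVec]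
  have hrr_quad : r ⬝ᵥ r
      = (fun j : {j // j ∈ γ''} => W j.1) ⬝ᵥ ((gram X γ'') *ᵥ (fun j => W j.1)) := by
    rw [← hrW, dot_self_mulVec, _root_.gram]
  have hREw := hRE γ'' le_rfl (fun j => W j.1)
  rw [Matrix.smul_mulVec, dotProduct_smul, smul_eq_mul] at hREw
  have hsumW : (∑ j ∈ γs \ γ, β j ^ 2) ≤ ∑ j : {j // j ∈ γ''}, W j.1 ^ 2 := by
    have h1 : ∑ j : {j // j ∈ γ''}, W j.1 ^ 2 = ∑ j ∈ γ'', W j ^ 2 :=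
      Finset.sum_coe_sort γ'' (fun j => W j ^ 2)
    have h2 : ∑ j ∈ γs \ γ, β j ^ 2 = ∑ j ∈ γs \ γ, W j ^ 2 := by
      refine Finset.sum_congr rfl fun j hj => ?_
      simp only [hW]
      rw [dif_neg (Finset.mem_sdiff.mp hj).2, sub_zero]
    rw [h1, h2]
    apply Finset.sum_le_sum_of_subset_of_nonneg
    · intro j hj
      exact Finset.mem_union_right _ (Finset.mem_sdiff.mp hj).1
    · intro j _ _
      exact sq_nonneg _
  have hpart2 : (n : ℝ) * ν * (∑ j ∈ γs \ γ, β j ^ 2) ≤ r ⬝ᵥ r := by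
    have h1 : ν * (∑ j : {j // j ∈ γ''}, W j.1 ^ 2) ≤ (n:ℝ)⁻¹ * (r ⬝ᵥ r) := by
      rw [hrr_quad]; exact hREw
    have h2 := mul_le_mul_of_nonneg_left h1 (le_of_lt hnR)
    have h3 : (n:ℝ) * ((n:ℝ)⁻¹ * (r ⬝ᵥ r)) = r ⬝ᵥ r := by
      field_simp
    rw [h3] at h2
    calc (n : ℝ) * ν * (∑ j ∈ γs \ γ, β j ^ 2)
        ≤ (n : ℝ) * ν * (∑ j : {j // j ∈ γ''}, W j.1 ^ 2) := by
          apply mul_le_mul_of_nonneg_left hsumW (by positivity)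
      _ = (n : ℝ) * (ν * (∑ j : {j // j ∈ γ''}, W j.1 ^ 2)) := by ring
      _ ≤ r ⬝ᵥ r := h2
  have hpart2' : (n:ℝ) * ν ^ 2 * (∑ j ∈ γs \ γ, β j ^ 2) ≤ ν * (u ⬝ᵥ r) := by
    rw [hrru]
    have h1 := mul_le_mul_of_nonneg_left hpart2 (le_of_lt hν)
    calc (n:ℝ) * ν ^ 2 * (∑ j ∈ γs \ γ, β j ^ 2)
        = ν * ((n:ℝ) * ν * (∑ j ∈ γs \ γ, β j ^ 2)) := by ring
      _ ≤ ν * (r ⬝ᵥ r) := h1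
  -- PART 1 --
  have hgain : ∀ ℓ ∈ γs \ γ,
      c ℓ ^ 2 ≤ (n : ℝ) *
        ((∑ i, ((proj X (insert ℓ γ)) *ᵥ u) i ^ 2) - (∑ i, (P *ᵥ u) i ^ 2)) := by
    intro ℓ hℓ
    have hℓs : ℓ ∈ γs := (Finset.mem_sdiff.mp hℓ).1
    have hsub1 : insert ℓ γ ⊆ γ ∪ γs := by
      intro x hx
      rcases Finset.mem_insert.mp hx with h | h
      · exact h ▸ Finset.mem_union_right _ hℓs
      · exact Finset.mem_union_left _ h
    have hdet1 : IsUnit (gram X (insert ℓ γ)).det :=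
      gram_det_isUnit X _ ν hν hn (hRE _ (Finset.card_le_card hsub1))
    set P₁ := proj X (insert ℓ γ) with hP1def
    have hP1t : P₁ᵀ = P₁ := proj_symm X _
    have hP1P1 : P₁ * P₁ = P₁ := proj_idem X _ hdet1
    have hP1A1 : P₁ * subCols X (insert ℓ γ) = subCols X (insert ℓ γ) :=
      proj_mul_subCols X _ hdet1
    have hP1A : P₁ * A = A := by
      rw [hA]
      ext i j
      have h1 := congrFun (congrFun hP1A1 i) ⟨j.1, Finset.mem_insert_of_mem j.2⟩
      simpa [Matrix.mul_apply, subCols] using h1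
    have hP1c : P₁ *ᵥ (fun i => X i ℓ) = fun i => X i ℓ := by
      funext i
      have h1 := congrFun (congrFun hP1A1 i) ⟨ℓ, Finset.mem_insert_self ℓ γ⟩
      simpa [Matrix.mul_apply, Matrix.mulVec, dotProduct, subCols] using h1
    have hP1P : P₁ * P = P := by
      rw [hPdef, proj, ← hA, ← Matrix.mul_assoc, ← Matrix.mul_assoc, hP1A]
    have hPP1 : P * P₁ = P := by
      have h1 := congrArg Matrix.transpose hP1P
      rw [Matrix.transpose_mul, hPt, hP1t] at h1
      exact h1
    have hQt : (P₁ - P)ᵀ = P₁ - P := by rw [Matrix.transpose_sub, hPt, hP1t]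
    have hQQ : (P₁ - P) * (P₁ - P) = P₁ - P := by
      rw [Matrix.sub_mul, Matrix.mul_sub, Matrix.mul_sub, hP1P1, hP1P, hPP1, hPP]
      abel
    set xt : Fin n → ℝ := (1 - P) *ᵥ (fun i => X i ℓ) with hxt
    have hQx : (P₁ - P) *ᵥ xt = xt := by
      rw [hxt, Matrix.mulVec_mulVec]
      have h1 : (P₁ - P) * (1 - P) = P₁ - P := by
        rw [Matrix.mul_sub, Matrix.mul_one, Matrix.sub_mul, hP1P, hPP]
        abel
      rw [h1, Matrix.sub_mulVec, Matrix.sub_mulVec, hP1c, Matrix.one_mulVec]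
    have hc_xt : xt ⬝ᵥ u = c ℓ := by
      rw [hxt, dot_mulVec_left, h1Pt, ← hrdef]
    have hxt_Qu : xt ⬝ᵥ u = xt ⬝ᵥ ((P₁ - P) *ᵥ u) := by
      conv_lhs => rw [← hQx]
      rw [dot_mulVec_left, hQt]
    have hCS : (xt ⬝ᵥ ((P₁ - P) *ᵥ u)) ^ 2
        ≤ (xt ⬝ᵥ xt) * (u ⬝ᵥ ((P₁ - P) *ᵥ u)) := by
      have h1 := Finset.sum_mul_sq_le_sq_mul_sq Finset.univ xt ((P₁ - P) *ᵥ u)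
      have h2 : (∑ i, xt i ^ 2) = xt ⬝ᵥ xt := by
        simp [dotProduct, sq]
      have h3 : (∑ i, ((P₁ - P) *ᵥ u) i ^ 2) = u ⬝ᵥ ((P₁ - P) *ᵥ u) := by
        rw [← sym_idem_quad _ hQt hQQ u]
        simp [dotProduct, sq]
      rw [h2, h3] at h1
      exact h1
    have hxtn : xt ⬝ᵥ xt ≤ (n:ℝ) := by
      have h1 : xt ⬝ᵥ xt = (fun i => X i ℓ) ⬝ᵥ ((1 - P) *ᵥ (fun i => X i ℓ)) := by
        rw [hxt]; exact sym_idem_quad _ h1Pt h1PP _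
      rw [h1, Matrix.sub_mulVec, Matrix.one_mulVec, dotProduct_sub]
      have h2 : (fun i => X i ℓ) ⬝ᵥ (fun i => X i ℓ) = (n:ℝ) := by
        rw [← hnorm ℓ]; simp [dotProduct, sq]
      have h3 : 0 ≤ (fun i => X i ℓ) ⬝ᵥ (P *ᵥ (fun i => X i ℓ)) := by
        rw [← sym_idem_quad _ hPt hPP]; exact dot_self_nonneg _
      linarith
    have hQu_nonneg : 0 ≤ u ⬝ᵥ ((P₁ - P) *ᵥ u) := by
      rw [← sym_idem_quad _ hQt hQQ u]; exact dot_self_nonneg _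
    have hmain : c ℓ ^ 2 ≤ (n:ℝ) * (u ⬝ᵥ ((P₁ - P) *ᵥ u)) :=
      calc c ℓ ^ 2 = (xt ⬝ᵥ ((P₁ - P) *ᵥ u)) ^ 2 := by rw [← hxt_Qu, hc_xt]
        _ ≤ (xt ⬝ᵥ xt) * (u ⬝ᵥ ((P₁ - P) *ᵥ u)) := hCS
        _ ≤ (n:ℝ) * (u ⬝ᵥ ((P₁ - P) *ᵥ u)) := mul_le_mul_of_nonneg_right hxtn hQu_nonneg
    have hsplit : u ⬝ᵥ ((P₁ - P) *ᵥ u)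
        = (∑ i, (P₁ *ᵥ u) i ^ 2) - (∑ i, (P *ᵥ u) i ^ 2) := by
      have e1 : (∑ i, (P₁ *ᵥ u) i ^ 2) = u ⬝ᵥ (P₁ *ᵥ u) := by
        rw [← sym_idem_quad _ hP1t hP1P1 u]
        simp [dotProduct, sq]
      have e2 : (∑ i, (P *ᵥ u) i ^ 2) = u ⬝ᵥ (P *ᵥ u) := by
        rw [← sym_idem_quad _ hPt hPP u]
        simp [dotProduct, sq]
      rw [e1, e2, Matrix.sub_mulVec, dotProduct_sub]
    rw [hsplit] at hmain
    exact hmain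
  have hSsum : (∑ j ∈ γs \ γ, c j ^ 2)
      ≤ (n:ℝ) * ∑ ℓ ∈ γs \ γ,
        ((∑ i, ((proj X (insert ℓ γ)) *ᵥ u) i ^ 2) - (∑ i, (P *ᵥ u) i ^ 2)) := by
    rw [Finset.mul_sum]
    exact Finset.sum_le_sum hgain
  have hrr_c : r ⬝ᵥ r = ∑ j ∈ γs \ γ, β j * c j := by
    rw [← hrru]
    have h1 : u ⬝ᵥ r = β ⬝ᵥ (Xᵀ *ᵥ r) := by rw [hu]; exact dot_mulVec_left X β r
    have h2 : β ⬝ᵥ (Xᵀ *ᵥ r) = ∑ j, β j * c j := by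
      simp only [dotProduct, hc, Matrix.mulVec, Matrix.transpose_apply]
    rw [h1, h2]
    symm
    apply Finset.sum_subset (Finset.subset_univ _)
    intro j _ hj
    by_cases hjs : j ∈ γs
    · have hjγ : j ∈ γ := by
        by_contra h
        exact hj (Finset.mem_sdiff.mpr ⟨hjs, h⟩)
      rw [hcγ j hjγ, mul_zero]
    · rw [hβ j hjs, zero_mul]
  have hCS2 : (r ⬝ᵥ r) ^ 2 ≤ (∑ j ∈ γs \ γ, β j ^ 2) * (∑ j ∈ γs \ γ, c j ^ 2) := by
    rw [hrr_c]
    exact Finset.sum_mul_sq_le_sq_mul_sq _ _ _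
  have hrr_nonneg : 0 ≤ r ⬝ᵥ r := dot_self_nonneg r
  have hS_nonneg : 0 ≤ ∑ j ∈ γs \ γ, c j ^ 2 := Finset.sum_nonneg fun j _ => sq_nonneg _
  have hkey : (n:ℝ) * ν * (r ⬝ᵥ r) ≤ ∑ j ∈ γs \ γ, c j ^ 2 := by
    rcases eq_or_lt_of_le hrr_nonneg with h0 | h0
    · rw [← h0, mul_zero]
      exact hS_nonneg
    · have h1 : (n:ℝ) * ν * (r ⬝ᵥ r) * (r ⬝ᵥ r) ≤ (∑ j ∈ γs \ γ, c j ^ 2) * (r ⬝ᵥ r) :=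
        calc (n:ℝ) * ν * (r ⬝ᵥ r) * (r ⬝ᵥ r) = (n:ℝ) * ν * ((r ⬝ᵥ r) ^ 2) := by ring
          _ ≤ (n:ℝ) * ν * ((∑ j ∈ γs \ γ, β j ^ 2) * (∑ j ∈ γs \ γ, c j ^ 2)) := by
              apply mul_le_mul_of_nonneg_left hCS2 (by positivity)
          _ = ((n:ℝ) * ν * (∑ j ∈ γs \ γ, β j ^ 2)) * (∑ j ∈ γs \ γ, c j ^ 2) := by ring
          _ ≤ (r ⬝ᵥ r) * (∑ j ∈ γs \ γ, c j ^ 2) :=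
              mul_le_mul_of_nonneg_right hpart2 hS_nonneg
          _ = (∑ j ∈ γs \ γ, c j ^ 2) * (r ⬝ᵥ r) := by ring
      exact le_of_mul_le_mul_right h1 h0
  constructor
  · rw [hrru]
    have h1 : (n:ℝ) * (ν * (r ⬝ᵥ r)) ≤ (n:ℝ) * ∑ ℓ ∈ γs \ γ,
        ((∑ i, ((proj X (insert ℓ γ)) *ᵥ u) i ^ 2) - (∑ i, (P *ᵥ u) i ^ 2)) :=
      calc (n:ℝ) * (ν * (r ⬝ᵥ r)) = (n:ℝ) * ν * (r ⬝ᵥ r) := by ring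
        _ ≤ ∑ j ∈ γs \ γ, c j ^ 2 := hkey
        _ ≤ _ := hSsum
    exact le_of_mul_le_mul_left h1 hnR
  · exact hpart2'
end

section
/- Let γ be underfitted and saturated (|γ| = s₀ and γ*∖γ nonempty), let j ∈ γ*∖γ, set γ̃ = γ ∪ {j}, and let k minimize ||X β̂(γ̃∖{k}) − X_{γ*∖γ̃} β*_{γ*∖γ̃}||² over k ∈ γ∖γ*. Then ||Φ_{γ̃} X_{γ*} β*||² − ||Φ_{γ̃∖{k}} X_{γ*} β*||² ≤ n ω(X) ||β*_{γ*∖γ}||² / (s₀ − s*), where ω(X) = max_γ ||(X_γ^T X_γ)^{-1} X_γ^T X_{γ*∖γ}||_op² and s* = |γ*|. -/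
open Matrix BigOperators

namespace BSL

noncomputable def SN {n : ℕ} (u : Fin n → ℝ) : ℝ := ∑ i, u i ^ 2

lemma SN_nonneg {n : ℕ} (u : Fin n → ℝ) : 0 ≤ SN u :=
  Finset.sum_nonneg fun i _ => sq_nonneg _

lemma SN_eq_dot {n : ℕ} (u : Fin n → ℝ) : SN u = u ⬝ᵥ u := by
  simp [SN, dotProduct, sq]

lemma SN_add {n : ℕ} (u w : Fin n → ℝ) :
    SN (u + w) = SN u + 2 * (u ⬝ᵥ w) + SN w := by
  simp only [SN_eq_dot, dotProduct_add, add_dotProduct, dotProduct_comm w u]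
  ring

lemma SN_neg {n : ℕ} (u : Fin n → ℝ) : SN (-u) = SN u := by
  simp [SN]

lemma SN_sub {n : ℕ} (u w : Fin n → ℝ) (h : u ⬝ᵥ w = 0) :
    SN (u - w) = SN u + SN w := by
  rw [sub_eq_add_neg, SN_add, dotProduct_neg, h, SN_neg]
  ring

lemma SN_eq_zero {n : ℕ} {u : Fin n → ℝ} (h : SN u = 0) : u = 0 := by
  funext i
  have := (Finset.sum_eq_zero_iff_of_nonneg (fun i _ => sq_nonneg (u i))).mp h i
    (Finset.mem_univ i)
  exact pow_eq_zero_iff (two_ne_zero) |>.mp this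

/-- extend a vector indexed by a subset to all of `Fin p` by zero. -/
noncomputable def extFun {p : ℕ} (σ : Finset (Fin p)) (x : {l // l ∈ σ} → ℝ) : Fin p → ℝ :=
  fun l => if h : l ∈ σ then x ⟨l, h⟩ else 0

lemma extFun_coe {p : ℕ} (σ : Finset (Fin p)) (x : {l // l ∈ σ} → ℝ) (l : {l // l ∈ σ}) :
    extFun σ x l.1 = x l := by
  simp [extFun]

lemma mulVec_of_support {n p : ℕ} (X : Matrix (Fin n) (Fin p) ℝ) (σ : Finset (Fin p))
    (b : Fin p → ℝ) (hb : ∀ l ∉ σ, b l = 0) :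
    X.mulVec b = (subCols X σ).mulVec (fun l => b l.1) := by
  funext i
  have h1 : ∑ l ∈ σ, X i l * b l = ∑ l : Fin p, X i l * b l :=
    Finset.sum_subset (Finset.subset_univ σ) (fun l _ hl => by rw [hb l hl, mul_zero])
  calc X.mulVec b i = ∑ l : Fin p, X i l * b l := rfl
    _ = ∑ l ∈ σ, X i l * b l := h1.symm
    _ = ∑ l ∈ σ.attach, X i l.1 * b l.1 := (Finset.sum_attach σ fun l => X i l * b l).symm
    _ = (subCols X σ).mulVec (fun l => b l.1) i := by
        simp [Matrix.mulVec, dotProduct, subCols, Finset.univ_eq_attach]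

lemma mulVec_extFun {n p : ℕ} (X : Matrix (Fin n) (Fin p) ℝ) (σ : Finset (Fin p))
    (x : {l // l ∈ σ} → ℝ) :
    X.mulVec (extFun σ x) = (subCols X σ).mulVec x := by
  have hsupp : ∀ l ∉ σ, extFun σ x l = 0 := fun l hl => dif_neg hl
  rw [mulVec_of_support X σ (extFun σ x) hsupp]
  have harg : (fun l : {l // l ∈ σ} => extFun σ x l.1) = x :=
    funext fun l => extFun_coe σ x l
  rw [harg]

lemma mulVec_dot {n : ℕ} {α : Type*} [Fintype α] (A : Matrix (Fin n) α ℝ)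
    (c : α → ℝ) (w : Fin n → ℝ) :
    (A.mulVec c) ⬝ᵥ w = (Aᵀ.mulVec w) ⬝ᵥ c := by
  rw [dotProduct_comm, dotProduct_mulVec, ← mulVec_transpose]

section ProjFacts

variable {n p : ℕ} (X : Matrix (Fin n) (Fin p) ℝ) (γ' : Finset (Fin p))

lemma transpose_mul_proj (hG : IsUnit (gram X γ')) :
    (subCols X γ')ᵀ * proj X γ' = (subCols X γ')ᵀ := by
  have hd := (Matrix.isUnit_iff_isUnit_det _).mp hG
  calc (subCols X γ')ᵀ * proj X γ'
      = (gram X γ' * (gram X γ')⁻¹) * (subCols X γ')ᵀ := by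
        simp only [proj, _root_.gram, Matrix.mul_assoc]
    _ = (subCols X γ')ᵀ := by rw [Matrix.mul_nonsing_inv _ hd, Matrix.one_mul]

lemma proj_mul_subCols (hG : IsUnit (gram X γ')) :
    proj X γ' * subCols X γ' = subCols X γ' := by
  have hd := (Matrix.isUnit_iff_isUnit_det _).mp hG
  calc proj X γ' * subCols X γ'
      = subCols X γ' * ((gram X γ')⁻¹ * gram X γ') := by
        simp only [proj, _root_.gram, Matrix.mul_assoc]
    _ = subCols X γ' := by rw [Matrix.nonsing_inv_mul _ hd, Matrix.mul_one]

lemma proj_eq_mulVec (v : Fin n → ℝ) :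
    (proj X γ').mulVec v
      = (subCols X γ').mulVec (((gram X γ')⁻¹ * (subCols X γ')ᵀ).mulVec v) := by
  rw [Matrix.mulVec_mulVec, ← Matrix.mul_assoc]
  rfl

lemma resid_orth (hG : IsUnit (gram X γ')) (v : Fin n → ℝ) (c : {l // l ∈ γ'} → ℝ) :
    ((subCols X γ').mulVec c) ⬝ᵥ (v - (proj X γ').mulVec v) = 0 := by
  rw [mulVec_dot]
  have : (subCols X γ')ᵀ.mulVec (v - (proj X γ').mulVec v) = 0 := by
    rw [Matrix.mulVec_sub, Matrix.mulVec_mulVec, transpose_mul_proj X γ' hG, sub_self]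
  rw [this, zero_dotProduct]

lemma proj_resid_orth (hG : IsUnit (gram X γ')) (v : Fin n → ℝ) :
    ((proj X γ').mulVec v) ⬝ᵥ (v - (proj X γ').mulVec v) = 0 := by
  have h := resid_orth X γ' hG v (((gram X γ')⁻¹ * (subCols X γ')ᵀ).mulVec v)
  rwa [← proj_eq_mulVec] at h

lemma SN_proj_split (hG : IsUnit (gram X γ')) (v : Fin n → ℝ) (c : {l // l ∈ γ'} → ℝ) :
    SN ((proj X γ').mulVec ((subCols X γ').mulVec c + v))
      = SN ((subCols X γ').mulVec c) + 2 * ((subCols X γ').mulVec c ⬝ᵥ v)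
        + SN ((proj X γ').mulVec v) := by
  rw [Matrix.mulVec_add, Matrix.mulVec_mulVec, proj_mul_subCols X γ' hG, SN_add]
  have h2 : (subCols X γ').mulVec c ⬝ᵥ (proj X γ').mulVec v
      = (subCols X γ').mulVec c ⬝ᵥ v := by
    have h0 := resid_orth X γ' hG v c
    rw [dotProduct_sub, sub_eq_zero] at h0
    exact h0.symm
  rw [h2]

lemma SN_pythagoras (hG : IsUnit (gram X γ')) (v : Fin n → ℝ) :
    SN v = SN ((proj X γ').mulVec v) + SN (v - (proj X γ').mulVec v) := by
  have hsplit : v = (proj X γ').mulVec v + (v - (proj X γ').mulVec v) := by ring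
  calc SN v = SN ((proj X γ').mulVec v + (v - (proj X γ').mulVec v)) := by rw [← hsplit]
    _ = SN ((proj X γ').mulVec v) + 2 * ((proj X γ').mulVec v ⬝ᵥ (v - (proj X γ').mulVec v))
        + SN (v - (proj X γ').mulVec v) := SN_add _ _
    _ = SN ((proj X γ').mulVec v) + SN (v - (proj X γ').mulVec v) := by
        rw [proj_resid_orth X γ' hG]; ring

lemma residual_ge (hG : IsUnit (gram X γ')) (v : Fin n → ℝ) (b : Fin p → ℝ)
    (hb : ∀ l ∉ γ', b l = 0) :
    SN (v - (proj X γ').mulVec v) ≤ SN (X.mulVec b - v) := by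
  rw [mulVec_of_support X γ' b hb]
  set c : {l // l ∈ γ'} → ℝ := fun l => b l.1
  have hcol : (subCols X γ').mulVec c - (proj X γ').mulVec v
      = (subCols X γ').mulVec (c - ((gram X γ')⁻¹ * (subCols X γ')ᵀ).mulVec v) := by
    rw [Matrix.mulVec_sub, proj_eq_mulVec]
  have h1 : (subCols X γ').mulVec c - v
      = ((subCols X γ').mulVec c - (proj X γ').mulVec v) - (v - (proj X γ').mulVec v) := by
    ring
  have horth : ((subCols X γ').mulVec c - (proj X γ').mulVec v)
      ⬝ᵥ (v - (proj X γ').mulVec v) = 0 := by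
    rw [hcol]
    exact resid_orth X γ' hG v _
  rw [h1, SN_sub _ _ horth]
  have := SN_nonneg ((subCols X γ').mulVec c - (proj X γ').mulVec v)
  linarith

lemma residual_achieved (hG : IsUnit (gram X γ')) (v : Fin n → ℝ) :
    SN (X.mulVec (extFun γ' (((gram X γ')⁻¹ * (subCols X γ')ᵀ).mulVec v)) - v)
      = SN (v - (proj X γ').mulVec v) := by
  rw [mulVec_extFun, ← proj_eq_mulVec, ← neg_sub, SN_neg]

lemma isUnit_gram_subset {σ τ : Finset (Fin p)} (hστ : σ ⊆ τ)
    (hτ : IsUnit (gram X τ)) : IsUnit (gram X σ) := by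
  rw [Matrix.isUnit_iff_isUnit_det]
  by_contra hdet
  have hdet0 : (gram X σ).det = 0 := by
    simpa [isUnit_iff_ne_zero] using hdet
  obtain ⟨x, hx0, hx⟩ := (Matrix.exists_mulVec_eq_zero_iff).mpr hdet0
  have hAx : (subCols X σ).mulVec x = 0 := by
    apply SN_eq_zero
    have h1 : SN ((subCols X σ).mulVec x)
        = ((gram X σ).mulVec x) ⬝ᵥ x := by
      rw [SN_eq_dot, mulVec_dot, Matrix.mulVec_mulVec]
      rfl
    rw [h1, hx, zero_dotProduct]
  set x' : {l // l ∈ τ} → ℝ := fun l => extFun σ x l.1 with hx'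
  have hAτ : (subCols X τ).mulVec x' = 0 := by
    have hsupp : ∀ l ∉ τ, extFun σ x l = 0 := fun l hl =>
      dif_neg (fun hσ => hl (hστ hσ))
    rw [← mulVec_of_support X τ _ hsupp, mulVec_extFun, hAx]
  have hGx' : (gram X τ).mulVec x' = 0 := by
    have : (gram X τ).mulVec x' = (subCols X τ)ᵀ.mulVec ((subCols X τ).mulVec x') := by
      rw [Matrix.mulVec_mulVec]; rfl
    rw [this, hAτ, Matrix.mulVec_zero]
  have hx'0 : x' = 0 := by
    have hd := (Matrix.isUnit_iff_isUnit_det _).mp hτ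
    have := congrArg ((gram X τ)⁻¹.mulVec) hGx'
    rwa [Matrix.mulVec_mulVec, Matrix.nonsing_inv_mul _ hd, Matrix.one_mulVec,
      Matrix.mulVec_zero] at this
  apply hx0
  funext l
  show x l = 0
  calc x l = extFun σ x l.1 := (extFun_coe σ x l).symm
    _ = x' ⟨l.1, hστ l.2⟩ := rfl
    _ = 0 := by rw [hx'0]; rfl

end ProjFacts

end BSL

open BSL

/-- let `γ` be underfitted and saturated (`|γ| = s₀`, `γ*∖γ ≠ ∅`),
`j ∈ γ*∖γ`, `γ̃ = γ ∪ {j}`, and let `k ∈ γ∖γ*` minimize the least-squares residual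
`‖X β̂(γ̃∖{k}) - X_{γ*∖γ̃} β*_{γ*∖γ̃}‖²`.  Then
`‖Φ_{γ̃} X_{γ*}β*‖² - ‖Φ_{γ̃∖{k}} X_{γ*}β*‖² ≤ n ω(X) ‖β*_{γ*∖γ}‖²/(s₀ - s*)`,
where `ω` bounds the squared operator norm of `(X_{γ'}ᵀX_{γ'})⁻¹X_{γ'}ᵀX_{γ*∖γ'}`
over the model space, and `s* = |γ*|`. -/
theorem backward_swap_loss {n p : ℕ} (X : Matrix (Fin n) (Fin p) ℝ) (s₀ : ℕ)
    (γ γs : Finset (Fin p))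
    (hsat : γ.card = s₀) (hunder : (γs \ γ).Nonempty) (hss : γs.card < s₀)
    (hnorm : ∀ j : Fin p, ∑ i, (X i j) ^ 2 = (n : ℝ))
    (β : Fin p → ℝ) (hβ : ∀ l ∉ γs, β l = 0)
    (j : Fin p) (hj : j ∈ γs \ γ)
    (v : Fin n → ℝ)
    (hv : v = X.mulVec (fun l => if l ∈ γs \ insert j γ then β l else 0))
    (bhat : Finset (Fin p) → (Fin p → ℝ))
    (hbhat : ∀ γ' : Finset (Fin p),
      (∀ l ∉ γ', bhat γ' l = 0) ∧
      ∀ b : Fin p → ℝ, (∀ l ∉ γ', b l = 0) →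
        ∑ i, (X.mulVec (bhat γ') i - v i) ^ 2 ≤ ∑ i, (X.mulVec b i - v i) ^ 2)
    (k : Fin p) (hk : k ∈ γ \ γs)
    (hkmin : ∀ k' ∈ γ \ γs,
      ∑ i, (X.mulVec (bhat ((insert j γ).erase k)) i - v i) ^ 2 ≤
        ∑ i, (X.mulVec (bhat ((insert j γ).erase k')) i - v i) ^ 2)
    (ω : ℝ)
    (hω : ∀ γ' : Finset (Fin p), IsUnit (gram X γ') →
      ∀ u : {l // l ∈ γs \ γ'} → ℝ,
        (∑ a, (((gram X γ')⁻¹ * (subCols X γ')ᵀ * subCols X (γs \ γ')).mulVec u a) ^ 2) ≤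
          ω * ∑ a, u a ^ 2)
    (hU1 : IsUnit (gram X (insert j γ)))
    (hU2 : IsUnit (gram X ((insert j γ).erase k))) :
    (∑ i, ((proj X (insert j γ)).mulVec (X.mulVec β) i) ^ 2) -
      (∑ i, ((proj X ((insert j γ).erase k)).mulVec (X.mulVec β) i) ^ 2) ≤
    (n : ℝ) * ω * (∑ l ∈ γs \ γ, (β l) ^ 2) / ((s₀ : ℝ) - (γs.card : ℝ)) := by
  classical
  obtain ⟨hjs, hjγ⟩ := Finset.mem_sdiff.mp hj
  obtain ⟨hkγ, hks⟩ := Finset.mem_sdiff.mp hk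
  set γt := insert j γ with hγt
  set τ := γt.erase k with hτdef
  have hkγt : k ∈ γt := Finset.mem_insert_of_mem hkγ
  -- decomposition of β
  set βw : Fin p → ℝ := fun l => if l ∈ γt then β l else 0 with hβw
  set βv : Fin p → ℝ := fun l => if l ∈ γs \ γt then β l else 0 with hβv
  have hβsplit : β = βw + βv := by
    funext l
    by_cases h1 : l ∈ γt <;> by_cases h2 : l ∈ γs <;>
      simp [hβw, hβv, Finset.mem_sdiff, h1, h2, hβ l]
  set w : Fin n → ℝ := X.mulVec βw with hw
  have hz : X.mulVec β = w + v := by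
    rw [hβsplit, Matrix.mulVec_add, hv]
  -- supports of βw
  have hβw_suppτ : ∀ l ∉ τ, βw l = 0 := by
    intro l hl
    by_cases hlk : l = k
    · simp [hβw, hlk, hβ k hks]
    · have hlγt : l ∉ γt := fun h => hl (Finset.mem_erase.mpr ⟨hlk, h⟩)
      simp [hβw, hlγt]
  have hβw_suppγt : ∀ l ∉ γt, βw l = 0 := fun l hl => if_neg hl
  -- support of βv
  have hβv_supp : ∀ l ∉ γs \ γt, βv l = 0 := fun l hl => if_neg hl
  -- residual function
  have hR : ∀ σ : Finset (Fin p),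
      ∑ i, (X.mulVec (bhat σ) i - v i) ^ 2 = SN (X.mulVec (bhat σ) - v) := by
    intro σ; rfl
  -- STEP 1: rewrite the LHS
  have hdiff : (∑ i, ((proj X γt).mulVec (X.mulVec β) i) ^ 2) -
      (∑ i, ((proj X τ).mulVec (X.mulVec β) i) ^ 2)
      = SN (v - (proj X τ).mulVec v) - SN (v - (proj X γt).mulVec v) := by
    have e1 : (∑ i, ((proj X γt).mulVec (X.mulVec β) i) ^ 2)
        = SN ((proj X γt).mulVec (X.mulVec β)) := rfl
    have e2 : (∑ i, ((proj X τ).mulVec (X.mulVec β) i) ^ 2)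
        = SN ((proj X τ).mulVec (X.mulVec β)) := rfl
    rw [e1, e2, hz]
    have hw1 : w = (subCols X γt).mulVec (fun l => βw l.1) :=
      mulVec_of_support X γt βw hβw_suppγt
    have hw2 : w = (subCols X τ).mulVec (fun l => βw l.1) :=
      mulVec_of_support X τ βw hβw_suppτ
    have s1 : SN ((proj X γt).mulVec (w + v))
        = SN w + 2 * (w ⬝ᵥ v) + SN ((proj X γt).mulVec v) := by
      rw [hw1]; exact SN_proj_split X γt hU1 v _
    have s2 : SN ((proj X τ).mulVec (w + v))
        = SN w + 2 * (w ⬝ᵥ v) + SN ((proj X τ).mulVec v) := by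
      rw [hw2]; exact SN_proj_split X τ hU2 v _
    have p1 := SN_pythagoras X γt hU1 v
    have p2 := SN_pythagoras X τ hU2 v
    rw [s1, s2]
    linarith
  rw [hdiff]
  -- STEP 2: residual of bhat τ equals projection residual
  have hres : ∀ (σ : Finset (Fin p)), IsUnit (gram X σ) →
      SN (X.mulVec (bhat σ) - v) = SN (v - (proj X σ).mulVec v) := by
    intro σ hGσ
    apply le_antisymm
    · have hmin := (hbhat σ).2
        (extFun σ (((gram X σ)⁻¹ * (subCols X σ)ᵀ).mulVec v))
        (fun l hl => dif_neg hl)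
      rw [hR σ] at hmin
      calc SN (X.mulVec (bhat σ) - v)
          ≤ ∑ i, (X.mulVec (extFun σ (((gram X σ)⁻¹ * (subCols X σ)ᵀ).mulVec v)) i - v i) ^ 2 := hmin
        _ = SN (v - (proj X σ).mulVec v) := residual_achieved X σ hGσ v
    · exact residual_ge X σ hGσ v (bhat σ) (hbhat σ).1
  -- the regression coefficient on γt
  set cfun : {l // l ∈ γt} → ℝ := ((gram X γt)⁻¹ * (subCols X γt)ᵀ).mulVec v with hcfun
  set cext : Fin p → ℝ := extFun γt cfun with hcext
  -- STEP 3: per-k' bound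
  have hperk : ∀ k' ∈ γ \ γs,
      SN (X.mulVec (bhat (γt.erase k')) - v)
        ≤ SN (v - (proj X γt).mulVec v) + (cext k') ^ 2 * n := by
    intro k' hk'
    obtain ⟨hk'γ, hk's⟩ := Finset.mem_sdiff.mp hk'
    have hk'γt : k' ∈ γt := Finset.mem_insert_of_mem hk'γ
    set k₀ : {l // l ∈ γt} := ⟨k', hk'γt⟩ with hk₀
    set b' : Fin p → ℝ := fun l => if l = k' then 0 else cext l with hb'
    have hb'supp : ∀ l ∉ γt.erase k', b' l = 0 := by
      intro l hl
      by_cases hlk : l = k'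
      · simp [hb', hlk]
      · have hlγt : l ∉ γt := fun h => hl (Finset.mem_erase.mpr ⟨hlk, h⟩)
        simp [hb', hlk, hcext, extFun, hlγt]
    have hmin := (hbhat (γt.erase k')).2 b' hb'supp
    rw [hR (γt.erase k')] at hmin
    refine le_trans hmin (le_of_eq ?_)
    -- compute SN (X b' - v)
    have hb'γt : ∀ l ∉ γt, b' l = 0 := by
      intro l hl
      have : l ≠ k' := fun h => hl (h ▸ hk'γt)
      simp [hb', this, hcext, extFun, hl]
    have hXb' : X.mulVec b' = (subCols X γt).mulVec (fun l => if l = k₀ then 0 else cfun l) := by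
      rw [mulVec_of_support X γt b' hb'γt]
      have harg : (fun l : {l // l ∈ γt} => b' l.1)
          = (fun l => if l = k₀ then 0 else cfun l) := by
        funext l
        by_cases h : l = k₀
        · have h1 : l.1 = k' := by rw [h]
          simp [hb', h1, h, hk₀]
        · have hne : l.1 ≠ k' := fun hcontra => h (Subtype.ext hcontra)
          simp only [hb', if_neg hne, if_neg h]
          exact extFun_coe γt cfun l
      rw [harg]
    set d : {l // l ∈ γt} → ℝ := fun l => if l = k₀ then cfun l else 0 with hd
    have hsum : (fun l => if l = k₀ then 0 else cfun l) + d = cfun := by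
      funext l
      by_cases h : l = k₀ <;> simp [hd, h]
    have hXb'2 : X.mulVec b' - v
        = -((v - (proj X γt).mulVec v) + (subCols X γt).mulVec d) := by
      rw [hXb']
      have harg2 : cfun - d = (fun l => if l = k₀ then 0 else cfun l) := by
        funext l
        by_cases h : l = k₀ <;> simp [hd, h]
      have : (subCols X γt).mulVec (fun l => if l = k₀ then 0 else cfun l)
          = (proj X γt).mulVec v - (subCols X γt).mulVec d := by
        rw [proj_eq_mulVec, ← hcfun, ← Matrix.mulVec_sub, harg2]
      rw [this]; ring
    have hcross : (v - (proj X γt).mulVec v) ⬝ᵥ (subCols X γt).mulVec d = 0 := by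
      rw [dotProduct_comm]; exact resid_orth X γt hU1 v d
    have hSNd : SN ((subCols X γt).mulVec d) = (cext k') ^ 2 * n := by
      have hmv : (subCols X γt).mulVec d = fun i => X i k' * cfun k₀ := by
        funext i
        calc (subCols X γt).mulVec d i
            = ∑ l, (if l = k₀ then X i l.1 * cfun l else 0) := by
              simp [Matrix.mulVec, dotProduct, hd, subCols, mul_ite]
          _ = X i k' * cfun k₀ := by rw [Finset.sum_ite_eq' Finset.univ k₀]; simp [hk₀]
      have hck : cext k' = cfun k₀ := by
        simp [hcext, hk₀, extFun, hk'γt]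
      rw [hmv, hck]
      calc SN (fun i => X i k' * cfun k₀) = ∑ i, (X i k') ^ 2 * (cfun k₀) ^ 2 := by
            simp [SN, mul_pow]
        _ = (∑ i, (X i k') ^ 2) * (cfun k₀) ^ 2 := by rw [Finset.sum_mul]
        _ = (cfun k₀) ^ 2 * n := by rw [hnorm k']; ring
    show SN (X.mulVec b' - v) = SN (v - (proj X γt).mulVec v) + (cext k') ^ 2 * n
    rw [hXb'2, SN_neg, SN_add, hcross, hSNd]
    ring
  -- STEP 4: averaging
  set m := (γ \ γs).card with hm
  have hmpos : 0 < m := Finset.card_pos.mpr ⟨k, hk⟩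
  set D := SN (v - (proj X τ).mulVec v) - SN (v - (proj X γt).mulVec v) with hD
  set S := ∑ k' ∈ γ \ γs, (cext k') ^ 2 with hS
  have havg : (m : ℝ) * SN (X.mulVec (bhat τ) - v)
      ≤ ∑ k' ∈ γ \ γs, SN (X.mulVec (bhat (γt.erase k')) - v) := by
    have := Finset.card_nsmul_le_sum (γ \ γs)
      (fun k' => SN (X.mulVec (bhat (γt.erase k')) - v))
      (SN (X.mulVec (bhat τ) - v))
      (fun k' hk' => by
        show SN (X.mulVec (bhat τ) - v) ≤ SN (X.mulVec (bhat (γt.erase k')) - v)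
        rw [← hR, ← hR]; exact hkmin k' hk')
    rwa [nsmul_eq_mul] at this
  have hsum2 : ∑ k' ∈ γ \ γs, SN (X.mulVec (bhat (γt.erase k')) - v)
      ≤ (m : ℝ) * SN (v - (proj X γt).mulVec v) + S * n := by
    calc ∑ k' ∈ γ \ γs, SN (X.mulVec (bhat (γt.erase k')) - v)
        ≤ ∑ k' ∈ γ \ γs, (SN (v - (proj X γt).mulVec v) + (cext k') ^ 2 * n) :=
          Finset.sum_le_sum hperk
      _ = (m : ℝ) * SN (v - (proj X γt).mulVec v) + S * n := by
          rw [Finset.sum_add_distrib, Finset.sum_const, nsmul_eq_mul, ← Finset.sum_mul]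
  have hDm : (m : ℝ) * D ≤ n * S := by
    have h1 : SN (X.mulVec (bhat τ) - v) = SN (v - (proj X τ).mulVec v) := hres τ hU2
    have h2 := le_trans havg hsum2
    rw [h1] at h2
    have : (m:ℝ) * D = (m:ℝ) * SN (v - (proj X τ).mulVec v)
        - (m:ℝ) * SN (v - (proj X γt).mulVec v) := by rw [hD]; ring
    nlinarith [h2]
  -- STEP 5: bound S via ω
  have hωnonneg : 0 ≤ ω := by
    have hGγ : IsUnit (gram X γ) := isUnit_gram_subset X (Finset.subset_insert j γ) hU1
    set u₀ : {l // l ∈ γs \ γ} → ℝ := fun a => if a = ⟨j, hj⟩ then 1 else 0 with hu₀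
    have hsum1 : ∑ a, (u₀ a) ^ 2 = 1 := by
      have : ∀ a, (u₀ a) ^ 2 = if a = ⟨j, hj⟩ then 1 else 0 := by
        intro a; by_cases h : a = ⟨j, hj⟩ <;> simp [hu₀, h]
      rw [Finset.sum_congr rfl (fun a _ => this a), Finset.sum_ite_eq' Finset.univ]
      simp
    have := hω γ hGγ u₀
    rw [hsum1, mul_one] at this
    exact le_trans (Finset.sum_nonneg (fun a _ => sq_nonneg _)) this
  -- v as mulVec of subCols on γs \ γt
  set u : {l // l ∈ γs \ γt} → ℝ := fun a => β a.1 with hu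
  have hvu : v = (subCols X (γs \ γt)).mulVec u := by
    rw [hv]
    rw [mulVec_of_support X (γs \ γt) _ (fun l hl => if_neg hl)]
    congr 1
    funext l
    simp [hu, l.2]
  have hcfun_u : cfun = ((gram X γt)⁻¹ * (subCols X γt)ᵀ * subCols X (γs \ γt)).mulVec u := by
    rw [hcfun, hvu, Matrix.mulVec_mulVec]
  have hSsub : S ≤ ω * ∑ l ∈ γs \ γ, (β l) ^ 2 := by
    have step1 : S ≤ ∑ l ∈ γt, (cext l) ^ 2 := by
      apply Finset.sum_le_sum_of_subset_of_nonneg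
      · intro l hl
        exact Finset.mem_insert_of_mem (Finset.mem_sdiff.mp hl).1
      · exact fun l _ _ => sq_nonneg _
    have step2 : ∑ l ∈ γt, (cext l) ^ 2 = ∑ l : {l // l ∈ γt}, (cfun l) ^ 2 := by
      rw [← Finset.sum_attach γt (fun l => (cext l) ^ 2), Finset.univ_eq_attach]
      exact Finset.sum_congr rfl (fun l _ => by rw [hcext, extFun_coe γt cfun l])
    have step3 : ∑ l : {l // l ∈ γt}, (cfun l) ^ 2 ≤ ω * ∑ a, (u a) ^ 2 := by
      rw [hcfun_u]
      exact hω γt hU1 u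
    have step4 : ∑ a, (u a) ^ 2 = ∑ l ∈ γs \ γt, (β l) ^ 2 := by
      rw [← Finset.sum_attach (γs \ γt) (fun l => (β l) ^ 2), Finset.univ_eq_attach]
    have step5 : ∑ l ∈ γs \ γt, (β l) ^ 2 ≤ ∑ l ∈ γs \ γ, (β l) ^ 2 := by
      apply Finset.sum_le_sum_of_subset_of_nonneg
      · exact Finset.sdiff_subset_sdiff (le_refl γs) (Finset.subset_insert j γ)
      · exact fun l _ _ => sq_nonneg _
    calc S ≤ ∑ l : {l // l ∈ γt}, (cfun l) ^ 2 := step1.trans_eq step2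
      _ ≤ ω * ∑ l ∈ γs \ γt, (β l) ^ 2 := by rw [← step4]; exact step3
      _ ≤ ω * ∑ l ∈ γs \ γ, (β l) ^ 2 := by
          exact mul_le_mul_of_nonneg_left step5 hωnonneg
  -- STEP 6: cardinality and final algebra
  set B := ∑ l ∈ γs \ γ, (β l) ^ 2 with hB
  have hBnonneg : 0 ≤ B := Finset.sum_nonneg fun l _ => sq_nonneg _
  have hcard : (s₀ : ℝ) - (γs.card : ℝ) ≤ (m : ℝ) := by
    have h1 : γ.card - γs.card ≤ m := Finset.le_card_sdiff γs γ
    have h2 : s₀ ≤ m + γs.card := by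
      rw [← hsat]
      omega
    have := Nat.cast_le (α := ℝ) |>.mpr h2
    push_cast at this
    linarith
  have hcard0 : 0 < (s₀ : ℝ) - (γs.card : ℝ) := by
    have := Nat.cast_lt (α := ℝ) |>.mpr hss
    linarith
  have hmR : 0 < (m : ℝ) := lt_of_lt_of_le hcard0 hcard
  have hfin : D ≤ (n : ℝ) * ω * B / (m : ℝ) := by
    rw [le_div_iff₀ hmR]
    have hnS : (n : ℝ) * S ≤ (n : ℝ) * (ω * B) :=
      mul_le_mul_of_nonneg_left hSsub (Nat.cast_nonneg n)
    nlinarith [hDm]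
  calc D ≤ (n : ℝ) * ω * B / (m : ℝ) := hfin
    _ ≤ (n : ℝ) * ω * B / ((s₀ : ℝ) - (γs.card : ℝ)) := by
        apply div_le_div_of_nonneg_left _ hcard0 hcard
        positivity
end

section
/- Conductance upper bound on the spectral gap: for a reversible Markov chain with transition matrix P and stationary distribution π on a finite state space M, 1 − λ₂ ≤ 2 Φ_C, where Φ_C = min over A ⊂ M with 0 < π(A) < 1 of [Σ_{γ∈A} π(γ) P(γ, A^c)] / [π(A) π(A^c)]. -/
open Matrix BigOperators

/-- conductance upper bound on the spectral gap: for a reversible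
Markov chain with transition matrix `P` and stationary distribution `π`,
`1 - λ₂ ≤ 2 Φ_C`, i.e. for every set `A` with `0 < π(A) < 1`,
`1 - λ₂ ≤ 2 [Σ_{γ∈A} π(γ) P(γ, Aᶜ)] / [π(A) π(Aᶜ)]`.  Here `λ₂` is characterized
as the greatest eigenvalue of `P` with an eigenvector orthogonal to `π`. -/
theorem conductance_upper_bound {M : Type*} [Fintype M] [DecidableEq M]
    (P : Matrix M M ℝ) (π : M → ℝ)
    (hπ : ∀ x, 0 < π x) (hsum : ∑ x, π x = 1)
    (hst : ∀ x, ∑ y, P x y = 1) (hnn : ∀ x y, 0 ≤ P x y)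
    (hrev : ∀ x y, π x * P x y = π y * P y x)
    (lam₂ : ℝ)
    (hlam : IsGreatest {l : ℝ | ∃ v : M → ℝ, v ≠ 0 ∧ (∑ x, π x * v x) = 0 ∧
      P.mulVec v = l • v} lam₂) :
    ∀ A : Finset M, 0 < ∑ x ∈ A, π x → (∑ x ∈ A, π x) < 1 →
      1 - lam₂ ≤ 2 * ((∑ x ∈ A, π x * ∑ y ∈ Aᶜ, P x y) /
        ((∑ x ∈ A, π x) * ∑ x ∈ Aᶜ, π x)) := by
  intro A hA0 hA1
  set s : M → ℝ := fun x => Real.sqrt (π x) with hs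
  have hspos : ∀ x, 0 < s x := fun x => Real.sqrt_pos.2 (hπ x)
  have hss : ∀ x, s x * s x = π x := fun x => Real.mul_self_sqrt (hπ x).le
  set pA : ℝ := ∑ x ∈ A, π x with hpA
  set qA : ℝ := ∑ x ∈ Aᶜ, π x with hqA
  have hpq : pA + qA = 1 := by rw [hpA, hqA, Finset.sum_add_sum_compl, hsum]
  have hq0 : 0 < qA := by linarith
  set Q : ℝ := ∑ x ∈ A, π x * ∑ y ∈ Aᶜ, P x y with hQ
  have hQrev : ∑ x ∈ Aᶜ, π x * ∑ y ∈ A, P x y = Q := by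
    rw [hQ]
    simp only [Finset.mul_sum]
    rw [Finset.sum_comm]
    apply Finset.sum_congr rfl; intro x _
    apply Finset.sum_congr rfl; intro y _
    exact hrev y x
  -- symmetrized matrix
  set Smat : Matrix M M ℝ := fun x y => s x * P x y / s y with hSmat
  have hSmat_symm : ∀ x y, Smat x y = Smat y x := by
    intro x y
    show s x * P x y / s y = s y * P y x / s x
    rw [div_eq_div_iff (hspos y).ne' (hspos x).ne']
    linear_combination P x y * hss x - P y x * hss y + hrev x y
  set S : EuclideanSpace ℝ M →ₗ[ℝ] EuclideanSpace ℝ M := Matrix.toEuclideanLin Smat with hS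
  have hSapp : ∀ (w : EuclideanSpace ℝ M) (x : M), S w x = ∑ y, Smat x y * w y := fun _ _ => rfl
  have hinner : ∀ v w : EuclideanSpace ℝ M, @inner ℝ _ _ v w = ∑ x, v x * w x := by
    intro v w; simp [PiLp.inner_apply, RCLike.inner_apply, conj_trivial]
    exact Finset.sum_congr rfl fun x _ => mul_comm _ _
  have hSsym : S.IsSymmetric := by
    intro v w
    rw [hinner, hinner]
    simp only [hSapp, Finset.sum_mul, Finset.mul_sum]
    rw [Finset.sum_comm]
    apply Finset.sum_congr rfl; intro x _
    apply Finset.sum_congr rfl; intro y _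
    rw [hSmat_symm y x]; ring
  set u : EuclideanSpace ℝ M := WithLp.toLp 2 (fun x => s x : M → ℝ) with hu
  have hSu : S u = u := by
    ext x
    rw [hSapp]
    show ∑ y, s x * P x y / s y * s y = s x
    have hy : ∀ y, s x * P x y / s y * s y = s x * P x y := by
      intro y; exact div_mul_cancel₀ _ (hspos y).ne'
    simp only [hy, ← Finset.mul_sum, hst, mul_one]
  set W : Submodule ℝ (EuclideanSpace ℝ M) := (ℝ ∙ u)ᗮ with hW
  have hWmem : ∀ w : EuclideanSpace ℝ M, w ∈ W ↔ @inner ℝ _ _ u w = 0 := by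
    intro w; exact Submodule.mem_orthogonal_singleton_iff_inner_right
  have hWinv : ∀ w ∈ W, S w ∈ W := by
    intro w hw
    rw [hWmem] at hw ⊢
    calc @inner ℝ _ _ u (S w) = @inner ℝ _ _ (S u) w := (hSsym u w).symm
    _ = 0 := by rw [hSu, hw]
  set T := S.restrict hWinv with hT
  have hTsym : T.IsSymmetric := hSsym.restrict_invariant hWinv
  -- the test vector
  set v0 : M → ℝ := fun x => if x ∈ A then qA else -pA with hv0
  set w0 : EuclideanSpace ℝ M := WithLp.toLp 2 (fun x => s x * v0 x : M → ℝ) with hw0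
  have hπv0 : ∀ x, s x * (s x * v0 x) = π x * v0 x := by
    intro x; rw [← mul_assoc, hss]
  have hw0W : w0 ∈ W := by
    rw [hWmem, hinner]
    show ∑ x, s x * (s x * v0 x) = 0
    simp only [hπv0]
    rw [← Finset.sum_add_sum_compl A]
    have h1 : ∑ x ∈ A, π x * v0 x = pA * qA := by
      have h0 : ∀ x ∈ A, π x * v0 x = π x * qA := fun x hx => by
        simp only [hv0, if_pos hx]
      rw [Finset.sum_congr rfl h0, ← Finset.sum_mul, ← hpA]
    have h2 : ∑ x ∈ Aᶜ, π x * v0 x = qA * (-pA) := by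
      have h0 : ∀ x ∈ Aᶜ, π x * v0 x = π x * (-pA) := fun x hx => by
        simp only [hv0, if_neg (Finset.mem_compl.1 hx)]
      rw [Finset.sum_congr rfl h0, ← Finset.sum_mul, ← hqA]
    rw [h1, h2]; ring
  obtain ⟨a, ha⟩ : A.Nonempty := by
    by_contra h
    rw [Finset.not_nonempty_iff_eq_empty] at h
    rw [hpA, h, Finset.sum_empty] at hA0; exact lt_irrefl _ hA0
  have hw0ne : w0 ≠ 0 := by
    intro h
    have h2 : s a * v0 a = 0 := congrArg (fun w : EuclideanSpace ℝ M => w a) h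
    simp only [hv0, if_pos ha] at h2
    rcases mul_eq_zero.1 h2 with h' | h'
    · exact (hspos a).ne' h'
    · exact hq0.ne' h'
  haveI : Nontrivial W := nontrivial_of_ne ⟨w0, hw0W⟩ 0 (by
    intro h; exact hw0ne (by simpa using congrArg Subtype.val h))
  -- the top eigenvalue of T
  have heig' := hTsym.hasEigenvalue_iSup_of_finiteDimensional
  set μ : ℝ := ⨆ x : { x : ↥W // x ≠ 0 },
      RCLike.re (@inner ℝ _ _ (T ↑x) (↑x : ↥W)) / ‖(x : ↥W)‖ ^ 2 with hμ
  have heig : Module.End.HasEigenvalue T μ := by simpa using heig'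
  -- μ ≤ lam₂
  have hμle : μ ≤ lam₂ := by
    obtain ⟨w', hw'⟩ := heig.exists_hasEigenvector
    set e : EuclideanSpace ℝ M := (w' : EuclideanSpace ℝ M) with he
    have hene : e ≠ 0 := by
      intro h; exact hw'.2 (by simpa [he, Submodule.coe_eq_zero] using h)
    have hSe : S e = μ • e := by
      have h1 := hw'.apply_eq_smul
      have h2 := congrArg (Subtype.val) h1
      simpa [hT, LinearMap.restrict_apply] using h2
    apply hlam.2
    refine ⟨fun y => e y / s y, ?_, ?_, ?_⟩
    · intro h
      apply hene
      ext x
      have h2 := congrFun h x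
      simp only at h2
      rcases div_eq_zero_iff.1 h2 with h' | h'
      · exact h'
      · exact absurd h' (hspos x).ne'
    · have heW : e ∈ W := w'.2
      rw [hWmem, hinner] at heW
      calc ∑ x, π x * (e x / s x) = ∑ x, s x * e x := by
            apply Finset.sum_congr rfl; intro x _
            rw [← hss x]; field_simp [(hspos x).ne']
      _ = 0 := heW
    · funext x
      have hx : S e x = (μ • e) x := by rw [hSe]
      rw [hSapp] at hx
      show ∑ y, P x y * (e y / s y) = μ * (e x / s x)
      have hx' : ∑ y, s x * P x y / s y * e y = μ * e x := hx
      have h3 : ∑ y, P x y * (e y / s y) = (∑ y, s x * P x y / s y * e y) / s x := by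
        rw [Finset.sum_div]
        apply Finset.sum_congr rfl; intro y _
        rw [eq_div_iff (hspos x).ne']
        field_simp [(hspos y).ne']
      rw [h3, hx']
      rw [mul_div_assoc]
  -- Rayleigh quotient of the test vector
  have hnorm : @inner ℝ _ _ w0 w0 = pA * qA := by
    rw [hinner]
    show ∑ x, (s x * v0 x) * (s x * v0 x) = pA * qA
    have h0 : ∀ x, (s x * v0 x) * (s x * v0 x) = π x * (v0 x * v0 x) := by
      intro x; rw [← hss x]; ring
    simp only [h0]
    rw [← Finset.sum_add_sum_compl A]
    have h1 : ∑ x ∈ A, π x * (v0 x * v0 x) = pA * (qA * qA) := by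
      have ha0 : ∀ x ∈ A, π x * (v0 x * v0 x) = π x * (qA * qA) := fun x hx => by
        simp only [hv0, if_pos hx]
      rw [Finset.sum_congr rfl ha0, ← Finset.sum_mul, ← hpA]
    have h2 : ∑ x ∈ Aᶜ, π x * (v0 x * v0 x) = qA * (pA * pA) := by
      have ha0 : ∀ x ∈ Aᶜ, π x * (v0 x * v0 x) = π x * (pA * pA) := fun x hx => by
        simp only [hv0, if_neg (Finset.mem_compl.1 hx)]; ring
      rw [Finset.sum_congr rfl ha0, ← Finset.sum_mul, ← hqA]
    rw [h1, h2]; linear_combination pA * qA * hpq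
  have hray : @inner ℝ _ _ (S w0) w0 = pA * qA - Q := by
    rw [hinner]
    have hterm : ∀ x, S w0 x * w0 x = π x * v0 x * ∑ y, P x y * v0 y := by
      intro x
      rw [hSapp]
      show (∑ y, s x * P x y / s y * (s y * v0 y)) * (s x * v0 x) = _
      have h0 : ∀ y, s x * P x y / s y * (s y * v0 y) = s x * (P x y * v0 y) := by
        intro y; field_simp [(hspos y).ne']
      simp only [h0, ← Finset.mul_sum]
      rw [← hss x]; ring
    simp only [hterm]
    have hc : ∀ x, ∑ y, P x y * v0 y = qA - ∑ y ∈ Aᶜ, P x y := by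
      intro x
      rw [← Finset.sum_add_sum_compl A (fun y => P x y * v0 y)]
      have h1 : ∑ y ∈ A, P x y * v0 y = (∑ y ∈ A, P x y) * qA := by
        have h0 : ∀ y ∈ A, P x y * v0 y = P x y * qA := fun y hy => by
          simp only [hv0, if_pos hy]
        rw [Finset.sum_congr rfl h0, ← Finset.sum_mul]
      have h2 : ∑ y ∈ Aᶜ, P x y * v0 y = (∑ y ∈ Aᶜ, P x y) * (-pA) := by
        have h0 : ∀ y ∈ Aᶜ, P x y * v0 y = P x y * (-pA) := fun y hy => by
          simp only [hv0, if_neg (Finset.mem_compl.1 hy)]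
        rw [Finset.sum_congr rfl h0, ← Finset.sum_mul]
      have h3 : ∑ y ∈ A, P x y + ∑ y ∈ Aᶜ, P x y = 1 := by
        rw [Finset.sum_add_sum_compl]; exact hst x
      rw [h1, h2]
      linear_combination (-(∑ y ∈ Aᶜ, P x y)) * hpq + qA * h3
    simp only [hc]
    rw [← Finset.sum_add_sum_compl A]
    have h1 : ∑ x ∈ A, π x * v0 x * (qA - ∑ y ∈ Aᶜ, P x y) = qA * qA * pA - qA * Q := by
      have h0 : ∀ x ∈ A, π x * v0 x * (qA - ∑ y ∈ Aᶜ, P x y)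
          = qA * qA * π x - qA * (π x * ∑ y ∈ Aᶜ, P x y) := by
        intro x hx; simp only [hv0, if_pos hx]; ring
      rw [Finset.sum_congr rfl h0, Finset.sum_sub_distrib, ← Finset.mul_sum, ← Finset.mul_sum,
        ← hpA, ← hQ]
    have hcomp : ∑ x ∈ Aᶜ, π x * ∑ y ∈ Aᶜ, P x y = qA - Q := by
      have h0 : ∀ x ∈ Aᶜ, π x * ∑ y ∈ Aᶜ, P x y = π x - π x * ∑ y ∈ A, P x y := by
        intro x _
        have h3 : ∑ y ∈ A, P x y + ∑ y ∈ Aᶜ, P x y = 1 := by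
          rw [Finset.sum_add_sum_compl]; exact hst x
        linear_combination π x * h3
      rw [Finset.sum_congr rfl h0, Finset.sum_sub_distrib, hQrev, ← hqA]
    have h2 : ∑ x ∈ Aᶜ, π x * v0 x * (qA - ∑ y ∈ Aᶜ, P x y)
        = -pA * qA * qA + pA * (qA - Q) := by
      have h0 : ∀ x ∈ Aᶜ, π x * v0 x * (qA - ∑ y ∈ Aᶜ, P x y)
          = -pA * qA * π x + pA * (π x * ∑ y ∈ Aᶜ, P x y) := by
        intro x hx; simp only [hv0, if_neg (Finset.mem_compl.1 hx)]; ring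
      rw [Finset.sum_congr rfl h0, Finset.sum_add_distrib, ← Finset.mul_sum, ← Finset.mul_sum,
        ← hqA, hcomp]
    rw [h1, h2]
    linear_combination (-Q) * hpq
  -- lower bound μ by the Rayleigh quotient of w0
  have hbdd : BddAbove (Set.range fun x : { x : ↥W // x ≠ 0 } =>
      RCLike.re (@inner ℝ _ _ (T ↑x) (↑x : ↥W)) / ‖(x : ↥W)‖ ^ 2) := by
    set Tc := LinearMap.toContinuousLinearMap T with hTc
    refine ⟨‖Tc‖, ?_⟩
    rintro r ⟨x, rfl⟩
    dsimp only
    have hx0 : (0:ℝ) < ‖(x : ↥W)‖ := norm_pos_iff.2 x.2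
    have h1 : @inner ℝ _ _ (T ↑x) (↑x : ↥W) ≤ ‖T ↑x‖ * ‖(x : ↥W)‖ := real_inner_le_norm _ _
    have hTcx : Tc ↑x = T ↑x := congrFun (LinearMap.coe_toContinuousLinearMap' T) ↑x
    have h2 : ‖T (↑x : ↥W)‖ ≤ ‖Tc‖ * ‖(x : ↥W)‖ := by
      have h := Tc.le_opNorm (↑x : ↥W)
      rwa [hTcx] at h
    have h3 : RCLike.re (@inner ℝ _ _ (T ↑x) (↑x : ↥W)) = @inner ℝ _ _ (T ↑x) (↑x : ↥W) := rfl
    rw [h3, div_le_iff₀ (by positivity)]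
    nlinarith [norm_nonneg (T (↑x : ↥W))]
  have hle : (pA * qA - Q) / (pA * qA) ≤ μ := by
    have hne : (⟨w0, hw0W⟩ : ↥W) ≠ 0 := by
      intro h; exact hw0ne (by simpa using congrArg Subtype.val h)
    have h := le_ciSup hbdd (⟨⟨w0, hw0W⟩, hne⟩ : { x : ↥W // x ≠ 0 })
    rw [← hμ] at h
    have hTw0 : @inner ℝ _ _ (T ⟨w0, hw0W⟩) (⟨w0, hw0W⟩ : ↥W) = pA * qA - Q := by
      rw [Submodule.coe_inner]
      have : ((T ⟨w0, hw0W⟩ : ↥W) : EuclideanSpace ℝ M) = S w0 := rfl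
      rw [this, hray]
    have hnw0 : ‖(⟨w0, hw0W⟩ : ↥W)‖ ^ 2 = pA * qA := by
      rw [← real_inner_self_eq_norm_sq, Submodule.coe_inner]
      exact hnorm
    rw [hTw0] at h
    have h3 : RCLike.re (pA * qA - Q) = pA * qA - Q := rfl
    rw [h3, hnw0] at h
    exact h
  -- conclude
  have hpq0 : 0 < pA * qA := mul_pos hA0 hq0
  have hmain : 1 - lam₂ ≤ Q / (pA * qA) := by
    have h1 : (pA * qA - Q) / (pA * qA) ≤ lam₂ := hle.trans hμle
    rw [sub_div, div_self hpq0.ne'] at h1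
    linarith
  have hQ0 : 0 ≤ Q := Finset.sum_nonneg fun x _ =>
    mul_nonneg (hπ x).le (Finset.sum_nonneg fun y _ => hnn x y)
  have : 0 ≤ Q / (pA * qA) := div_nonneg hQ0 hpq0.le
  linarith
end
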